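/- Let n ≥ 3 and 2−n < γ < 0. There exists a constant C > 0 depending only on n and γ such that for every y ∈ ℝⁿ with y ≠ 0, the integral over the Euclidean quarter-space Q of ‖x−y‖^{2−n}·‖x‖^{γ−2} with respect to n-dimensional Lebesgue measure is finite and at most C‖y‖^{γ}. -/

import Mathlib

open MeasureTheory Metric Set

noncomputable section

/-- The Euclidean quarter-space `ℝⁿ_𝕃 = {x : 0 ≤ x₁, 0 ≤ xₙ}`, where `i0` and `iN` are the
indices of the coordinates `x₁` and `xₙ`. -/
def Qset {n : ℕ} (i0 iN : Fin n) : Set (EuclideanSpace ℝ (Fin n)) :=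
  {x | 0 ≤ x i0 ∧ 0 ≤ x iN}

section Aux

open Real Module Filter
open scoped ENNReal Topology

variable {E : Type*} [NormedAddCommGroup E] [NormedSpace ℝ E] [MeasurableSpace E] [BorelSpace E]
  [FiniteDimensional ℝ E] (μ : Measure E) [μ.IsAddHaarMeasure]

lemma integrableOn_rpow_norm_ball {p : ℝ} (hp : -(finrank ℝ E : ℝ) < p) (hp0 : p < 0) (R : ℝ) :
    IntegrableOn (fun x => ‖x‖ ^ p) (ball (0 : E) R) μ := by
  have hmeas : Measurable fun x : E => ‖x‖ ^ p := by fun_prop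
  refine ⟨hmeas.aestronglyMeasurable.restrict, ?_⟩
  rw [HasFiniteIntegral, lintegral_enorm_of_nonneg (fun x => rpow_nonneg (norm_nonneg x) p)]
  rw [lintegral_eq_lintegral_meas_le _ (Eventually.of_forall fun x => rpow_nonneg (norm_nonneg x) p)
    hmeas.aemeasurable.restrict]
  have hq : (finrank ℝ E : ℝ) * p⁻¹ < -1 := by
    rw [← div_eq_mul_inv, div_lt_iff_of_neg hp0]
    linarith
  calc
    ∫⁻ t in Ioi (0:ℝ), (μ.restrict (ball 0 R)) {a | t ≤ ‖a‖ ^ p}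
      ≤ ∫⁻ t in Ioc (0:ℝ) 1 ∪ Ioi 1, (μ.restrict (ball 0 R)) {a | t ≤ ‖a‖ ^ p} :=
        lintegral_mono_set Ioi_subset_Ioc_union_Ioi
    _ ≤ (∫⁻ t in Ioc (0:ℝ) 1, (μ.restrict (ball 0 R)) {a | t ≤ ‖a‖ ^ p})
        + ∫⁻ t in Ioi (1:ℝ), (μ.restrict (ball 0 R)) {a | t ≤ ‖a‖ ^ p} :=
        lintegral_union_le _ _ _
    _ < ∞ := by
      refine ENNReal.add_lt_top.2 ⟨?_, ?_⟩
      · calc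
          (∫⁻ t in Ioc (0:ℝ) 1, (μ.restrict (ball 0 R)) {a | t ≤ ‖a‖ ^ p})
            ≤ ∫⁻ _ in Ioc (0:ℝ) 1, μ (ball (0:E) R) := by
              refine setLIntegral_mono' measurableSet_Ioc fun t _ => ?_
              exact (measure_mono (subset_univ _)).trans_eq (Measure.restrict_apply_univ _)
          _ = μ (ball (0:E) R) * volume (Ioc (0:ℝ) 1) := setLIntegral_const _ _
          _ < ∞ := by
              rw [Real.volume_Ioc]
              exact ENNReal.mul_lt_top measure_ball_lt_top ENNReal.ofReal_lt_top
      · calc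
          (∫⁻ t in Ioi (1:ℝ), (μ.restrict (ball 0 R)) {a | t ≤ ‖a‖ ^ p})
            ≤ ∫⁻ t in Ioi (1:ℝ), ENNReal.ofReal (t ^ ((finrank ℝ E : ℝ) * p⁻¹))
                * μ (ball (0:E) 1) := by
              refine setLIntegral_mono' measurableSet_Ioi fun t ht => ?_
              have ht0 : (0:ℝ) < t := lt_trans one_pos ht
              have hsub : {a : E | t ≤ ‖a‖ ^ p} ⊆ closedBall 0 (t ^ p⁻¹) := by
                intro a ha
                simp only [mem_setOf_eq] at ha
                have ha0 : a ≠ 0 := by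
                  rintro rfl
                  simp [Real.zero_rpow hp0.ne] at ha
                  linarith
                rw [mem_closedBall_zero_iff]
                exact (Real.le_rpow_inv_iff_of_neg (norm_pos_iff.mpr ha0) ht0 hp0).mpr ha
              calc
                (μ.restrict (ball 0 R)) {a | t ≤ ‖a‖ ^ p} ≤ μ {a : E | t ≤ ‖a‖ ^ p} :=
                  Measure.restrict_apply_le _ _
                _ ≤ μ (closedBall 0 (t ^ p⁻¹)) := measure_mono hsub
                _ = ENNReal.ofReal ((t ^ p⁻¹) ^ finrank ℝ E) * μ (ball (0:E) 1) :=
                  Measure.addHaar_closedBall μ _ (rpow_nonneg ht0.le _)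
                _ = ENNReal.ofReal (t ^ ((finrank ℝ E : ℝ) * p⁻¹)) * μ (ball (0:E) 1) := by
                  rw [← Real.rpow_natCast (t ^ p⁻¹) (finrank ℝ E), ← Real.rpow_mul ht0.le,
                    mul_comm p⁻¹]
          _ = (∫⁻ t in Ioi (1:ℝ), ENNReal.ofReal (t ^ ((finrank ℝ E : ℝ) * p⁻¹)))
                * μ (ball (0:E) 1) :=
              lintegral_mul_const' _ _ measure_ball_lt_top.ne
          _ < ∞ := ENNReal.mul_lt_top
              ((integrableOn_Ioi_rpow_of_lt hq one_pos).setLIntegral_lt_top)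
              measure_ball_lt_top

lemma integrableOn_rpow_norm_compl {p : ℝ} (hp : p < -(finrank ℝ E : ℝ)) :
    IntegrableOn (fun x => ‖x‖ ^ p) (closedBall (0 : E) 2)ᶜ μ := by
  have hint : Integrable (fun x : E => (2:ℝ) ^ (-p) * (1 + ‖x‖) ^ p) μ := by
    have := (integrable_one_add_norm (μ := μ) (r := -p) (by linarith)).const_mul
      ((2:ℝ) ^ (-p))
    simpa using this
  refine (hint.integrableOn).mono' ((by fun_prop : Measurable fun x : E => ‖x‖ ^ p)
    |>.aestronglyMeasurable.restrict) ?_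
  refine (ae_restrict_iff' (measurableSet_closedBall.compl)).2
    (Eventually.of_forall fun x hx => ?_)
  have hx2 : (2:ℝ) < ‖x‖ := by
    simpa [mem_closedBall_zero_iff] using hx
  have hx0 : (0:ℝ) < ‖x‖ := by linarith
  rw [Real.norm_of_nonneg (rpow_nonneg (norm_nonneg x) p)]
  have h1 : (1:ℝ) + ‖x‖ ≤ 2 * ‖x‖ := by linarith
  have h2 : (2 * ‖x‖ : ℝ) ^ p ≤ (1 + ‖x‖) ^ p :=
    Real.rpow_le_rpow_of_nonpos (by positivity) h1 (by have : (0:ℝ) ≤ (finrank ℝ E : ℝ) := Nat.cast_nonneg _; linarith)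
  calc ‖x‖ ^ p = (2:ℝ) ^ (-p) * ((2 * ‖x‖) ^ p) := by
        rw [Real.mul_rpow (by norm_num) hx0.le, ← mul_assoc, ← Real.rpow_add two_pos,
          neg_add_cancel, Real.rpow_zero, one_mul]
    _ ≤ (2:ℝ) ^ (-p) * (1 + ‖x‖) ^ p :=
        mul_le_mul_of_nonneg_left h2 (rpow_nonneg (by norm_num) _)

lemma unit_bound (n : ℕ) (hn : 3 ≤ n) (γ : ℝ) (hγ₁ : 2 - (n : ℝ) < γ) (hγ₂ : γ < 0) :
    ∃ C₀ : ℝ, 0 ≤ C₀ ∧ ∀ u : EuclideanSpace ℝ (Fin n), ‖u‖ = 1 →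
      Integrable (fun x => ‖x - u‖ ^ ((2:ℝ) - n) * ‖x‖ ^ (γ - 2)) volume ∧
      (∫ x, ‖x - u‖ ^ ((2:ℝ) - n) * ‖x‖ ^ (γ - 2)) ≤ C₀ := by
  have hn3 : (3:ℝ) ≤ (n:ℝ) := by exact_mod_cast hn
  have h2n : (2:ℝ) - n < 0 := by linarith
  have hγ2 : γ - 2 < 0 := by linarith
  have hfr : ((finrank ℝ (EuclideanSpace ℝ (Fin n))) : ℝ) = (n:ℝ) := by
    rw [finrank_euclideanSpace_fin]
  have hI1 : IntegrableOn (fun x : EuclideanSpace ℝ (Fin n) => ‖x‖ ^ (γ - 2))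
      (ball 0 (1/2)) volume :=
    integrableOn_rpow_norm_ball _ (by rw [hfr]; linarith) hγ2 _
  have hI2 : IntegrableOn (fun x : EuclideanSpace ℝ (Fin n) => ‖x‖ ^ ((2:ℝ) - n))
      (ball 0 (1/2)) volume :=
    integrableOn_rpow_norm_ball _ (by rw [hfr]; linarith) h2n _
  have hI4 : IntegrableOn (fun x : EuclideanSpace ℝ (Fin n) => ‖x‖ ^ (γ - (n:ℝ)))
      (closedBall 0 2)ᶜ volume :=
    integrableOn_rpow_norm_compl _ (by rw [hfr]; linarith)
  set A₁ : ℝ := ∫ x : EuclideanSpace ℝ (Fin n) in ball 0 (1/2), ‖x‖ ^ (γ - 2) with hA₁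
  set A₂ : ℝ := ∫ x : EuclideanSpace ℝ (Fin n) in ball 0 (1/2), ‖x‖ ^ ((2:ℝ) - n) with hA₂
  set A₃ : ℝ := (volume (closedBall (0 : EuclideanSpace ℝ (Fin n)) 2)).toReal with hA₃
  set A₄ : ℝ := ∫ x : EuclideanSpace ℝ (Fin n) in (closedBall 0 2)ᶜ, ‖x‖ ^ (γ - (n:ℝ)) with hA₄
  have hA₁0 : 0 ≤ A₁ := setIntegral_nonneg measurableSet_ball fun x _ => rpow_nonneg (norm_nonneg x) _
  have hA₂0 : 0 ≤ A₂ := setIntegral_nonneg measurableSet_ball fun x _ => rpow_nonneg (norm_nonneg x) _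
  have hA₃0 : 0 ≤ A₃ := ENNReal.toReal_nonneg
  have hA₄0 : 0 ≤ A₄ := setIntegral_nonneg measurableSet_closedBall.compl
    fun x _ => rpow_nonneg (norm_nonneg x) _
  refine ⟨2^((n:ℝ)-2) * A₁ + 2^((2:ℝ)-γ) * A₂ + A₃ * (2^((n:ℝ)-2) * 2^((2:ℝ)-γ))
      + 2^((n:ℝ)-2) * A₄, by positivity, fun u hu => ?_⟩
  set g₁ : EuclideanSpace ℝ (Fin n) → ℝ :=
    fun x => 2^((n:ℝ)-2) * indicator (ball (0 : EuclideanSpace ℝ (Fin n)) (1/2))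
      (fun z => ‖z‖^(γ-2)) x with hg₁def
  set g₂ : EuclideanSpace ℝ (Fin n) → ℝ :=
    fun x => 2^((2:ℝ)-γ) * indicator (ball (0 : EuclideanSpace ℝ (Fin n)) (1/2))
      (fun z => ‖z‖^((2:ℝ)-n)) (x - u) with hg₂def
  set g₃ : EuclideanSpace ℝ (Fin n) → ℝ :=
    fun x => indicator (closedBall (0 : EuclideanSpace ℝ (Fin n)) 2)
      (fun _ => 2^((n:ℝ)-2) * 2^((2:ℝ)-γ)) x with hg₃def
  set g₄ : EuclideanSpace ℝ (Fin n) → ℝ :=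
    fun x => 2^((n:ℝ)-2) * indicator (closedBall (0 : EuclideanSpace ℝ (Fin n)) 2)ᶜ
      (fun z => ‖z‖^(γ-(n:ℝ))) x with hg₄def
  have hg₁ : Integrable g₁ volume :=
    ((integrable_indicator_iff measurableSet_ball).2 hI1).const_mul _
  have hg₂ : Integrable g₂ volume :=
    (((integrable_indicator_iff measurableSet_ball).2 hI2).comp_sub_right u).const_mul _
  have hg₃ : Integrable g₃ volume :=
    (integrable_indicator_iff measurableSet_closedBall).2
      (integrableOn_const measure_closedBall_lt_top.ne)
  have hg₄ : Integrable g₄ volume :=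
    ((integrable_indicator_iff measurableSet_closedBall.compl).2 hI4).const_mul _
  have hg : Integrable (fun x => g₁ x + g₂ x + g₃ x + g₄ x) volume :=
    ((hg₁.add hg₂).add hg₃).add hg₄
  -- nonnegativity of the pieces
  have hg₁0 : ∀ x, 0 ≤ g₁ x := fun x => by
    apply mul_nonneg (by positivity)
    exact indicator_nonneg (fun z _ => rpow_nonneg (norm_nonneg z) _) x
  have hg₂0 : ∀ x, 0 ≤ g₂ x := fun x => by
    apply mul_nonneg (by positivity)
    exact indicator_nonneg (fun z _ => rpow_nonneg (norm_nonneg z) _) _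
  have hg₃0 : ∀ x, 0 ≤ g₃ x := fun x =>
    indicator_nonneg (fun z _ => by positivity) x
  have hg₄0 : ∀ x, 0 ≤ g₄ x := fun x => by
    apply mul_nonneg (by positivity)
    exact indicator_nonneg (fun z _ => rpow_nonneg (norm_nonneg z) _) x
  have hhalf : ((1:ℝ)/2) ^ ((2:ℝ)-n) = 2^((n:ℝ)-2) := by
    rw [one_div, Real.inv_rpow (by norm_num : (0:ℝ) ≤ 2),
      ← Real.rpow_neg (by norm_num : (0:ℝ) ≤ 2), neg_sub]
  have hhalf' : ((1:ℝ)/2) ^ (γ-2) = 2^((2:ℝ)-γ) := by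
    rw [one_div, Real.inv_rpow (by norm_num : (0:ℝ) ≤ 2),
      ← Real.rpow_neg (by norm_num : (0:ℝ) ≤ 2), neg_sub]
  -- pointwise bound
  have hpt : ∀ x : EuclideanSpace ℝ (Fin n),
      ‖x - u‖ ^ ((2:ℝ) - n) * ‖x‖ ^ (γ - 2) ≤ g₁ x + g₂ x + g₃ x + g₄ x := by
    intro x
    rcases lt_or_ge ‖x‖ (1/2) with hx | hx
    · -- near the origin
      have hb : (1:ℝ)/2 ≤ ‖x - u‖ := by
        have h := norm_sub_norm_le u x
        rw [← norm_sub_rev x u] at h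
        linarith [hu ▸ h]
      have hbound : ‖x - u‖ ^ ((2:ℝ)-n) ≤ 2^((n:ℝ)-2) := by
        rw [← hhalf]
        exact Real.rpow_le_rpow_of_nonpos (by norm_num) hb h2n.le
      have : ‖x - u‖ ^ ((2:ℝ) - n) * ‖x‖ ^ (γ - 2) ≤ g₁ x := by
        rw [hg₁def]
        simp only [indicator_of_mem (mem_ball_zero_iff.2 hx)]
        exact mul_le_mul_of_nonneg_right hbound (rpow_nonneg (norm_nonneg x) _)
      linarith [hg₂0 x, hg₃0 x, hg₄0 x]
    · rcases lt_or_ge ‖x - u‖ (1/2) with hxu | hxu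
      · -- near u
        have hb : (1:ℝ)/2 ≤ ‖x‖ := by
          have h := norm_sub_norm_le u (u - x)
          rw [sub_sub_cancel] at h
          have h1 : ‖u - x‖ = ‖x - u‖ := norm_sub_rev u x
          linarith [h, h1, hu.le, hu.ge]
        have hbound : ‖x‖ ^ (γ-2) ≤ 2^((2:ℝ)-γ) := by
          rw [← hhalf']
          exact Real.rpow_le_rpow_of_nonpos (by norm_num) hb hγ2.le
        have : ‖x - u‖ ^ ((2:ℝ) - n) * ‖x‖ ^ (γ - 2) ≤ g₂ x := by
          rw [hg₂def]
          have hmem : x - u ∈ ball (0 : EuclideanSpace ℝ (Fin n)) (1/2) :=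
            mem_ball_zero_iff.2 hxu
          simp only [indicator_of_mem hmem]
          rw [mul_comm (2^((2:ℝ)-γ)) _]
          exact mul_le_mul_of_nonneg_left hbound (rpow_nonneg (norm_nonneg _) _)
        linarith [hg₁0 x, hg₃0 x, hg₄0 x]
      · rcases le_or_gt ‖x‖ 2 with hx2 | hx2
        · -- middle zone
          have hbound1 : ‖x - u‖ ^ ((2:ℝ)-n) ≤ 2^((n:ℝ)-2) := by
            rw [← hhalf]
            exact Real.rpow_le_rpow_of_nonpos (by norm_num) hxu h2n.le
          have hbound2 : ‖x‖ ^ (γ-2) ≤ 2^((2:ℝ)-γ) := by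
            rw [← hhalf']
            exact Real.rpow_le_rpow_of_nonpos (by norm_num) hx hγ2.le
          have : ‖x - u‖ ^ ((2:ℝ) - n) * ‖x‖ ^ (γ - 2) ≤ g₃ x := by
            rw [hg₃def]
            simp only [indicator_of_mem (mem_closedBall_zero_iff.2 hx2)]
            exact mul_le_mul hbound1 hbound2 (rpow_nonneg (norm_nonneg x) _) (by positivity)
          linarith [hg₁0 x, hg₂0 x, hg₄0 x]
        · -- far away
          have hx0 : (0:ℝ) < ‖x‖ := by linarith
          have hb : ‖x‖/2 ≤ ‖x - u‖ := by
            have h := norm_sub_norm_le x u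
            rw [hu] at h
            linarith
          have hbound : ‖x - u‖ ^ ((2:ℝ)-n) ≤ ‖x‖^((2:ℝ)-n) * 2^((n:ℝ)-2) := by
            have h1 : ‖x - u‖ ^ ((2:ℝ)-n) ≤ (‖x‖/2) ^ ((2:ℝ)-n) :=
              Real.rpow_le_rpow_of_nonpos (by positivity) hb h2n.le
            have h2 : (‖x‖/2) ^ ((2:ℝ)-n) = ‖x‖^((2:ℝ)-n) * 2^((n:ℝ)-2) := by
              rw [Real.div_rpow (norm_nonneg x) (by norm_num : (0:ℝ) ≤ 2), div_eq_mul_inv,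
                ← Real.rpow_neg (by norm_num : (0:ℝ) ≤ 2), neg_sub]
            linarith [h2 ▸ h1]
          have hkey : ‖x - u‖ ^ ((2:ℝ) - n) * ‖x‖ ^ (γ - 2) ≤ g₄ x := by
            rw [hg₄def]
            have hmem : x ∈ (closedBall (0 : EuclideanSpace ℝ (Fin n)) 2)ᶜ := by
              simp only [mem_compl_iff, mem_closedBall_zero_iff, not_le]
              exact hx2
            simp only [indicator_of_mem hmem]
            calc ‖x - u‖ ^ ((2:ℝ) - n) * ‖x‖ ^ (γ - 2)
                ≤ (‖x‖^((2:ℝ)-n) * 2^((n:ℝ)-2)) * ‖x‖ ^ (γ - 2) :=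
                  mul_le_mul_of_nonneg_right hbound (rpow_nonneg (norm_nonneg x) _)
              _ = 2^((n:ℝ)-2) * ‖x‖ ^ (γ - (n:ℝ)) := by
                  rw [mul_comm (‖x‖^((2:ℝ)-n)) _, mul_assoc, ← Real.rpow_add hx0]
                  ring_nf
          linarith [hg₁0 x, hg₂0 x, hg₃0 x]
  -- integrability of f_u
  have hfmeas : Measurable fun x : EuclideanSpace ℝ (Fin n) =>
      ‖x - u‖ ^ ((2:ℝ) - n) * ‖x‖ ^ (γ - 2) := by fun_prop
  have hfint : Integrable (fun x : EuclideanSpace ℝ (Fin n) =>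
      ‖x - u‖ ^ ((2:ℝ) - n) * ‖x‖ ^ (γ - 2)) volume := by
    refine hg.mono' hfmeas.aestronglyMeasurable (Eventually.of_forall fun x => ?_)
    rw [Real.norm_of_nonneg (by positivity)]
    exact hpt x
  refine ⟨hfint, ?_⟩
  have hIg : (∫ x, (g₁ x + g₂ x + g₃ x + g₄ x))
      = 2^((n:ℝ)-2) * A₁ + 2^((2:ℝ)-γ) * A₂ + A₃ * (2^((n:ℝ)-2) * 2^((2:ℝ)-γ))
        + 2^((n:ℝ)-2) * A₄ := by
    have h12 : Integrable (fun x => g₁ x + g₂ x) volume := hg₁.add hg₂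
    have h123 : Integrable (fun x => g₁ x + g₂ x + g₃ x) volume := h12.add hg₃
    have e1 : (∫ x, (g₁ x + g₂ x + g₃ x + g₄ x)) = (∫ x, g₁ x + g₂ x + g₃ x) + ∫ x, g₄ x :=
      integral_add h123 hg₄
    have e2 : (∫ x, g₁ x + g₂ x + g₃ x) = (∫ x, g₁ x + g₂ x) + ∫ x, g₃ x :=
      integral_add h12 hg₃
    have e3 : (∫ x, g₁ x + g₂ x) = (∫ x, g₁ x) + ∫ x, g₂ x := integral_add hg₁ hg₂
    rw [e1, e2, e3]
    congr 1
    · congr 1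
      · congr 1
        · rw [hg₁def]
          rw [integral_const_mul, integral_indicator measurableSet_ball]
        · rw [hg₂def]
          rw [integral_const_mul]
          rw [integral_sub_right_eq_self (fun z => indicator (ball (0 : EuclideanSpace ℝ (Fin n))
            (1/2)) (fun z => ‖z‖^((2:ℝ)-n)) z) u, integral_indicator measurableSet_ball]
      · rw [hg₃def, integral_indicator_const _ measurableSet_closedBall]
        rw [smul_eq_mul]
        rfl
    · rw [hg₄def]
      rw [integral_const_mul, integral_indicator measurableSet_closedBall.compl]
  rw [← hIg]
  exact integral_mono hfint hg hpt

theorem quarter_space_interior_kernel_estimate' (n : ℕ) (hn : 3 ≤ n) (γ : ℝ)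
    (hγ₁ : 2 - (n : ℝ) < γ) (hγ₂ : γ < 0) (Q : Set (EuclideanSpace ℝ (Fin n))) :
    ∃ C > 0, ∀ y : EuclideanSpace ℝ (Fin n), y ≠ 0 →
      IntegrableOn (fun x => ‖x - y‖ ^ ((2 : ℝ) - n) * ‖x‖ ^ (γ - 2)) Q volume ∧
      (∫ x in Q, ‖x - y‖ ^ ((2 : ℝ) - n) * ‖x‖ ^ (γ - 2)) ≤ C * ‖y‖ ^ γ := by
  obtain ⟨C₀, hC₀, H⟩ := unit_bound n hn γ hγ₁ hγ₂
  refine ⟨C₀ + 1, by positivity, fun y hy => ?_⟩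
  set f : EuclideanSpace ℝ (Fin n) → ℝ := fun x => ‖x - y‖ ^ ((2:ℝ) - n) * ‖x‖ ^ (γ - 2)
    with hf
  have hr : (0:ℝ) < ‖y‖ := norm_pos_iff.mpr hy
  set u : EuclideanSpace ℝ (Fin n) := ‖y‖⁻¹ • y with hudef
  have hu : ‖u‖ = 1 := norm_smul_inv_norm hy
  obtain ⟨hint_u, hbound_u⟩ := H u hu
  have hkey : ∀ z, f (‖y‖ • z) = ‖y‖ ^ (γ - (n:ℝ)) * (‖z - u‖ ^ ((2:ℝ) - n) * ‖z‖ ^ (γ - 2)) := by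
    intro z
    have hyu : ‖y‖ • u = y := by
      rw [hudef, smul_smul, mul_inv_cancel₀ hr.ne', one_smul]
    have h1 : ‖y‖ • z - y = ‖y‖ • (z - u) := by rw [smul_sub, hyu]
    rw [hf]
    simp only
    rw [h1, norm_smul, norm_smul, Real.norm_eq_abs, abs_of_pos hr,
      Real.mul_rpow hr.le (norm_nonneg _), Real.mul_rpow hr.le (norm_nonneg _)]
    have hcomb : ‖y‖^((2:ℝ)-n) * ‖y‖^(γ-2) = ‖y‖^(γ - (n:ℝ)) := by
      rw [← Real.rpow_add hr]
      ring_nf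
    calc ‖y‖^((2:ℝ)-n) * ‖z - u‖^((2:ℝ)-n) * (‖y‖^(γ-2) * ‖z‖^(γ-2))
        = (‖y‖^((2:ℝ)-n) * ‖y‖^(γ-2)) * (‖z - u‖^((2:ℝ)-n) * ‖z‖^(γ-2)) := by ring
      _ = ‖y‖ ^ (γ - (n:ℝ)) * (‖z - u‖ ^ ((2:ℝ) - n) * ‖z‖ ^ (γ - 2)) := by rw [hcomb]
  have hcomp : Integrable (fun z => f (‖y‖ • z)) volume := by
    rw [show (fun z => f (‖y‖ • z))
        = fun z => ‖y‖ ^ (γ - (n:ℝ)) * (‖z - u‖ ^ ((2:ℝ) - n) * ‖z‖ ^ (γ - 2)) from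
      funext hkey]
    exact hint_u.const_mul _
  have hfint : Integrable f volume := (integrable_comp_smul_iff volume f hr.ne').mp hcomp
  have heq := Measure.integral_comp_smul_of_nonneg (volume : Measure (EuclideanSpace ℝ (Fin n)))
    f ‖y‖ (hR := hr.le)
  have hL : (∫ z, f (‖y‖ • z))
      = ‖y‖ ^ (γ - (n:ℝ)) * ∫ z, ‖z - u‖ ^ ((2:ℝ) - n) * ‖z‖ ^ (γ - 2) := by
    rw [show (fun z => f (‖y‖ • z))
        = fun z => ‖y‖ ^ (γ - (n:ℝ)) * (‖z - u‖ ^ ((2:ℝ) - n) * ‖z‖ ^ (γ - 2)) from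
      funext hkey]
    exact integral_const_mul _ _
  have hIf : (∫ x, f x) = ‖y‖ ^ γ * ∫ z, ‖z - u‖ ^ ((2:ℝ) - n) * ‖z‖ ^ (γ - 2) := by
    have h2 : (∫ x, f x) = ‖y‖ ^ (finrank ℝ (EuclideanSpace ℝ (Fin n))) * ∫ z, f (‖y‖ • z) := by
      rw [heq, smul_eq_mul, ← mul_assoc, mul_inv_cancel₀ (pow_ne_zero _ hr.ne'), one_mul]
    rw [h2, hL, ← mul_assoc]
    congr 1
    rw [finrank_euclideanSpace_fin, ← Real.rpow_natCast ‖y‖ n, ← Real.rpow_add hr]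
    ring_nf
  have hInonneg : 0 ≤ ∫ z, ‖z - u‖ ^ ((2:ℝ) - n) * ‖z‖ ^ (γ - 2) :=
    integral_nonneg fun z => by positivity
  refine ⟨hfint.integrableOn, ?_⟩
  calc (∫ x in Q, f x) ≤ ∫ x, f x :=
        setIntegral_le_integral hfint (Eventually.of_forall fun x => by
          rw [hf]; positivity)
    _ = ‖y‖ ^ γ * ∫ z, ‖z - u‖ ^ ((2:ℝ) - n) * ‖z‖ ^ (γ - 2) := hIf
    _ ≤ ‖y‖ ^ γ * C₀ := mul_le_mul_of_nonneg_left hbound_u (rpow_nonneg (norm_nonneg y) _)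
    _ ≤ (C₀ + 1) * ‖y‖ ^ γ := by
        have h := rpow_nonneg (norm_nonneg y) γ
        nlinarith

end Aux

/-- For `n ≥ 3` and `2 - n < γ < 0` there is a constant `C > 0`, depending only on `n` and `γ`,
such that for every `y ≠ 0` the integral over the quarter-space of
`‖x - y‖ ^ (2 - n) * ‖x‖ ^ (γ - 2)` (with respect to Lebesgue measure) is finite and bounded
by `C * ‖y‖ ^ γ`. -/
theorem quarter_space_interior_kernel_estimate (n : ℕ) (hn : 3 ≤ n) (γ : ℝ)
    (hγ₁ : 2 - (n : ℝ) < γ) (hγ₂ : γ < 0) :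
    ∃ C > 0, ∀ y : EuclideanSpace ℝ (Fin n), y ≠ 0 →
      IntegrableOn (fun x => ‖x - y‖ ^ ((2 : ℝ) - n) * ‖x‖ ^ (γ - 2))
        (Qset (⟨0, by omega⟩ : Fin n) (⟨n - 1, by omega⟩ : Fin n)) volume ∧
      (∫ x in Qset (⟨0, by omega⟩ : Fin n) (⟨n - 1, by omega⟩ : Fin n),
          ‖x - y‖ ^ ((2 : ℝ) - n) * ‖x‖ ^ (γ - 2)) ≤ C * ‖y‖ ^ γ :=
  quarter_space_interior_kernel_estimate' n hn γ hγ₁ hγ₂ _
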